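/- Let 𝕄 = ℤ^m × ℝ^n be a mixed-integer space in ℝ^d (m ≥ 1, n ≥ 0, m + n = d). Then a set P ⊆ ℝ^d is a maximal 𝕄-free set if and only if P = P' × ℝ^n, where P' is a maximal lattice-free set in ℝ^m. -/

import Mathlib

open Set Pointwise MeasureTheory ENNReal

noncomputable section

variable {E : Type*}

def lred [AddCommGroup E] [Module ℝ E] [TopologicalSpace E] (L K : Set E) : Set E :=
  convexHull ℝ (K \ interior L)

def lclo [AddCommGroup E] [Module ℝ E] [TopologicalSpace E] (𝓛 : Set (Set E)) (K : Set E) : Set E :=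
  ⋂ L ∈ 𝓛, lred L K

def lcloIter [AddCommGroup E] [Module ℝ E] [TopologicalSpace E] (𝓛 : Set (Set E)) : ℕ → Set E → Set E
  | 0, K => K
  | (i+1), K => lclo 𝓛 (lcloIter 𝓛 i K)

def recCone [AddCommGroup E] [Module ℝ E] (K : Set E) : Set E :=
  {y | ∀ x ∈ K, ∀ t : ℝ, 0 ≤ t → x + t • y ∈ K}

def linealSp [AddCommGroup E] [Module ℝ E] (K : Set E) : Set E :=
  {y | ∀ x ∈ K, ∀ t : ℝ, x + t • y ∈ K}

def LineFree [AddCommGroup E] [Module ℝ E] (K : Set E) : Prop :=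
  ∀ x v : E, v ≠ 0 → ¬ (∀ t : ℝ, x + t • v ∈ K)

def setDim [AddCommGroup E] [Module ℝ E] (s : Set E) : ℕ :=
  Module.finrank ℝ (vectorSpan ℝ s)

def IsFaceOf [AddCommGroup E] [Module ℝ E] (K F : Set E) : Prop :=
  Convex ℝ F ∧ IsExtreme ℝ K F

abbrev Euc (d : ℕ) := EuclideanSpace ℝ (Fin d)

def latticePts (d : ℕ) : Set (Euc d) := {x | ∀ i, ∃ z : ℤ, x i = (z : ℝ)}

def IsRatPolyhedron (d : ℕ) (P : Set (Euc d)) : Prop :=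
  ∃ (n : ℕ) (a : Fin n → Fin d → ℚ) (b : Fin n → ℚ), (∀ i, a i ≠ 0) ∧
    P = {x | ∀ i, ∑ j, (a i j : ℝ) * x j ≤ (b i : ℝ)}

def IsPolyhedron (d : ℕ) (P : Set (Euc d)) : Prop :=
  ∃ (n : ℕ) (a : Fin n → Euc d) (b : Fin n → ℝ), (∀ i, a i ≠ 0) ∧
    P = {x | ∀ i, (inner ℝ (a i) x : ℝ) ≤ b i}

def IsFacetOf (d : ℕ) (L F : Set (Euc d)) : Prop :=
  IsFaceOf L F ∧ setDim F + 1 = d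

def IsOuterNormalOf (d : ℕ) (L F : Set (Euc d)) (u : Euc d) : Prop :=
  F = {x | x ∈ L ∧ ∀ y ∈ L, (inner ℝ u y : ℝ) ≤ inner ℝ u x}

def primFacetNormals (d : ℕ) (L : Set (Euc d)) : Set (Euc d) :=
  {u | (∃ z : Fin d → ℤ, (∀ i, u i = (z i : ℝ)) ∧ Finset.univ.gcd z = 1) ∧
    ∃ F, IsFacetOf d L F ∧ IsOuterNormalOf d L F u}

def MaxFacetWidthLE (d : ℕ) (L : Set (Euc d)) (c : ℝ) : Prop :=
  ∀ u ∈ primFacetNormals d L, ∀ x ∈ L, ∀ y ∈ L, (inner ℝ u x : ℝ) - inner ℝ u y ≤ c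

/-- The mixed-integer space `𝕄 = ℤ^m × ℝ^n` inside `ℝ^d = ℝ^m × ℝ^n`. -/
def mixedM (m n : ℕ) : Set (Euc m × Euc n) := {x | x.1 ∈ latticePts m}

/-- `L ⊆ ℝ^m × ℝ^n` is `𝕄`-free: `(m+n)`-dimensional, closed, convex, with
`int L ∩ 𝕄 = ∅`. -/
def IsMFree (m n : ℕ) (L : Set (Euc m × Euc n)) : Prop :=
  IsClosed L ∧ Convex ℝ L ∧ setDim L = m + n ∧ interior L ∩ mixedM m n = ∅

/-- `L` is maximal `𝕄`-free: `𝕄`-free and not properly contained in an `𝕄`-free set. -/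
def IsMaxMFree (m n : ℕ) (L : Set (Euc m × Euc n)) : Prop :=
  IsMFree m n L ∧ ∀ L' : Set (Euc m × Euc n), IsMFree m n L' → L ⊆ L' → L = L'

/-- `K ⊆ ℝ^m` is lattice-free. -/
def IsLatticeFree (m : ℕ) (K : Set (Euc m)) : Prop :=
  IsClosed K ∧ Convex ℝ K ∧ setDim K = m ∧ interior K ∩ latticePts m = ∅

/-- `K` is maximal lattice-free. -/
def IsMaxLatticeFree (m : ℕ) (K : Set (Euc m)) : Prop :=
  IsLatticeFree m K ∧ ∀ K' : Set (Euc m), IsLatticeFree m K' → K ⊆ K' → K = K'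


section AuxLemmas

open Filter Topology

lemma aux_closure_subset_closure_interior {F : Type*} [NormedAddCommGroup F] [NormedSpace ℝ F]
    {s : Set F} (hs : Convex ℝ s) {y : F} (hy : y ∈ interior s) :
    closure s ⊆ closure (interior s) := by
  intro x hx
  have htend : Tendsto (fun t : ℝ => x + t • (y - x)) (𝓝[>] 0) (𝓝 x) := by
    have hc : Continuous (fun t : ℝ => x + t • (y - x)) := by fun_prop
    have h1 := hc.tendsto 0
    simp only [zero_smul, add_zero] at h1
    exact h1.mono_left nhdsWithin_le_nhds
  refine mem_closure_of_tendsto htend ?_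
  filter_upwards [Ioc_mem_nhdsGT_of_mem (Set.left_mem_Ico.mpr zero_lt_one)] with t ht
  exact hs.add_smul_sub_mem_interior' hx hy ht

lemma aux_interior_closure {F : Type*} [NormedAddCommGroup F] [NormedSpace ℝ F]
    {s : Set F} (hs : Convex ℝ s) {y : F} (hy : y ∈ interior s) :
    interior (closure s) ⊆ interior s := by
  intro x hx
  have hcont : Tendsto (fun t : ℝ => x + t • (x - y)) (𝓝 0) (𝓝 x) := by
    have hc : Continuous (fun t : ℝ => x + t • (x - y)) := by fun_prop
    have h1 := hc.tendsto 0
    simpa using h1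
  have hev : ∀ᶠ t : ℝ in 𝓝 0, x + t • (x - y) ∈ interior (closure s) :=
    hcont.eventually (eventually_of_mem (isOpen_interior.mem_nhds hx) fun _ h => h)
  obtain ⟨ε, hεpos, hz⟩ :=
    ((eventually_mem_nhdsWithin (a := (0:ℝ)) (s := Set.Ioi (0:ℝ))).and
      (hev.filter_mono nhdsWithin_le_nhds)).exists
  have hzc : x + ε • (x - y) ∈ closure s := interior_subset hz
  have hεpos' : (0:ℝ) < ε := hεpos
  have h1ε : (0:ℝ) < 1 + ε := by linarith
  have ht : ε / (1 + ε) ∈ Set.Ioc (0:ℝ) 1 := by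
    constructor
    · positivity
    · rw [div_le_one h1ε]; linarith
  have hmem := hs.add_smul_sub_mem_interior' hzc hy ht
  have heq : x + ε • (x - y) + (ε / (1 + ε)) • (y - (x + ε • (x - y))) = x := by
    have hne : (1:ℝ) + ε ≠ 0 := ne_of_gt h1ε
    match_scalars <;> field_simp <;> ring_nf
  rwa [heq] at hmem

lemma setDim_eq_full {F : Type*} [NormedAddCommGroup F] [NormedSpace ℝ F]
    [FiniteDimensional ℝ F] {s : Set F} :
    setDim s = Module.finrank ℝ F ↔ vectorSpan ℝ s = ⊤ := by
  constructor
  · intro h; exact Submodule.eq_top_of_finrank_eq h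
  · intro h; rw [setDim, h, finrank_top]

lemma finrank_prod_euc (m n : ℕ) : Module.finrank ℝ (Euc m × Euc n) = m + n := by
  rw [Module.finrank_prod, finrank_euclideanSpace_fin, finrank_euclideanSpace_fin]

lemma nonempty_of_setDim_pos {F : Type*} [NormedAddCommGroup F] [NormedSpace ℝ F]
    {s : Set F} (h : 0 < setDim s) : s.Nonempty := by
  rcases s.eq_empty_or_nonempty with rfl | hne
  · rw [setDim, vectorSpan_empty] at h; simp at h
  · exact hne

lemma vectorSpan_univ_full (n : ℕ) : vectorSpan ℝ (univ : Set (Euc n)) = ⊤ := by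
  rw [eq_top_iff]
  intro v _
  rw [vectorSpan_def]
  have : v ∈ (univ : Set (Euc n)) -ᵥ univ := by
    have := Set.vsub_mem_vsub (s := (univ : Set (Euc n))) (t := univ) (mem_univ v) (mem_univ 0)
    simpa [vsub_eq_sub] using this
  exact Submodule.subset_span this

lemma vectorSpan_fst_image {m n : ℕ} {L : Set (Euc m × Euc n)}
    (h : vectorSpan ℝ L = ⊤) : vectorSpan ℝ (Prod.fst '' L) = ⊤ := by
  rw [eq_top_iff]
  intro u _
  have h0 : ((u, (0 : Euc n)) : Euc m × Euc n) ∈ vectorSpan ℝ L := by rw [h]; trivial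
  have key : Submodule.map (LinearMap.fst ℝ (Euc m) (Euc n)) (vectorSpan ℝ L)
      ≤ vectorSpan ℝ (Prod.fst '' L) := by
    rw [vectorSpan_def, vectorSpan_def, ← Submodule.span_image]
    apply Submodule.span_mono
    rintro _ ⟨p, hp, rfl⟩
    rw [Set.mem_vsub] at hp
    obtain ⟨a, ha, b, hb, rfl⟩ := hp
    refine Set.mem_vsub.mpr ⟨a.1, ⟨a, ha, rfl⟩, b.1, ⟨b, hb, rfl⟩, ?_⟩
    simp [vsub_eq_sub]
  exact key ⟨(u, 0), h0, rfl⟩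

lemma vectorSpan_prod_full {m n : ℕ} {s : Set (Euc m)} {t : Set (Euc n)}
    (hs : s.Nonempty) (ht : t.Nonempty) (h1 : vectorSpan ℝ s = ⊤)
    (h2 : vectorSpan ℝ t = ⊤) : vectorSpan ℝ (s ×ˢ t) = ⊤ := by
  obtain ⟨a0, ha0⟩ := hs
  obtain ⟨b0, hb0⟩ := ht
  rw [eq_top_iff]
  rintro ⟨v, w⟩ _
  have hinl : ∀ v : Euc m, ((v, (0 : Euc n)) : Euc m × Euc n) ∈ vectorSpan ℝ (s ×ˢ t) := by
    intro v
    have hv : v ∈ vectorSpan ℝ s := by rw [h1]; trivial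
    have key : Submodule.map (LinearMap.inl ℝ (Euc m) (Euc n)) (vectorSpan ℝ s)
        ≤ vectorSpan ℝ (s ×ˢ t) := by
      rw [vectorSpan_def, vectorSpan_def, ← Submodule.span_image]
      apply Submodule.span_mono
      rintro _ ⟨p, hp, rfl⟩
      rw [Set.mem_vsub] at hp
      obtain ⟨a, ha, b, hb, rfl⟩ := hp
      refine Set.mem_vsub.mpr ⟨(a, b0), ⟨ha, hb0⟩, (b, b0), ⟨hb, hb0⟩, ?_⟩
      simp [vsub_eq_sub, Prod.ext_iff]
    exact key ⟨v, hv, rfl⟩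
  have hinr : ∀ w : Euc n, (((0 : Euc m), w) : Euc m × Euc n) ∈ vectorSpan ℝ (s ×ˢ t) := by
    intro w
    have hw : w ∈ vectorSpan ℝ t := by rw [h2]; trivial
    have key : Submodule.map (LinearMap.inr ℝ (Euc m) (Euc n)) (vectorSpan ℝ t)
        ≤ vectorSpan ℝ (s ×ˢ t) := by
      rw [vectorSpan_def, vectorSpan_def, ← Submodule.span_image]
      apply Submodule.span_mono
      rintro _ ⟨p, hp, rfl⟩
      rw [Set.mem_vsub] at hp
      obtain ⟨a, ha, b, hb, rfl⟩ := hp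
      refine Set.mem_vsub.mpr ⟨(a0, a), ⟨ha0, ha⟩, (a0, b), ⟨ha0, hb⟩, ?_⟩
      simp [vsub_eq_sub, Prod.ext_iff]
    exact key ⟨w, hw, rfl⟩
  have hvw : ((v, w) : Euc m × Euc n) = (v, 0) + (0, w) := by simp
  rw [hvw]
  exact Submodule.add_mem _ (hinl v) (hinr w)

lemma product_lemma {m n : ℕ} (hm : 1 ≤ m) {K : Set (Euc m)} (hK : IsLatticeFree m K) :
    IsMFree m n (K ×ˢ (univ : Set (Euc n))) := by
  obtain ⟨hcl, hconv, hdim, hint⟩ := hK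
  have hKne : K.Nonempty := nonempty_of_setDim_pos (by omega)
  have hvsK : vectorSpan ℝ K = ⊤ := by
    have h := setDim_eq_full (s := K)
    rw [finrank_euclideanSpace_fin] at h
    exact h.mp hdim
  refine ⟨hcl.prod isClosed_univ, hconv.prod convex_univ, ?_, ?_⟩
  · have hvs := vectorSpan_prod_full hKne univ_nonempty hvsK (vectorSpan_univ_full n)
    have h2 := setDim_eq_full (s := K ×ˢ (univ : Set (Euc n))) |>.mpr hvs
    rwa [finrank_prod_euc] at h2
  · rw [eq_empty_iff_forall_notMem]
    rintro ⟨x, y⟩ ⟨hxy, hxl⟩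
    rw [interior_prod_eq] at hxy
    have hmem : x ∈ interior K ∩ latticePts m := ⟨hxy.1, hxl⟩
    rw [hint] at hmem
    exact hmem

lemma projection_lemma {m n : ℕ} (hm : 1 ≤ m) {L : Set (Euc m × Euc n)} (hL : IsMFree m n L) :
    IsLatticeFree m (closure (Prod.fst '' L)) ∧
    IsMFree m n ((closure (Prod.fst '' L)) ×ˢ (univ : Set (Euc n))) ∧
    L ⊆ (closure (Prod.fst '' L)) ×ˢ (univ : Set (Euc n)) := by
  obtain ⟨hcl, hconv, hdim, hint⟩ := hL
  have hrank := finrank_prod_euc m n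
  have hvs : vectorSpan ℝ L = ⊤ := setDim_eq_full.mp (hdim.trans hrank.symm)
  have hLne : L.Nonempty := nonempty_of_setDim_pos (by omega)
  have haff : affineSpan ℝ L = ⊤ :=
    (AffineSubspace.affineSpan_eq_top_iff_vectorSpan_eq_top_of_nonempty ℝ _ _ hLne).mpr hvs
  have hintne : (interior L).Nonempty :=
    hconv.interior_nonempty_iff_affineSpan_eq_top.mpr haff
  set C := Prod.fst '' L with hC
  have hCconv : Convex ℝ C := hconv.linear_image (LinearMap.fst ℝ (Euc m) (Euc n))
  set U := Prod.fst '' interior L with hU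
  have hUopen : IsOpen U := isOpenMap_fst _ isOpen_interior
  have hCclU : C ⊆ closure U := by
    rintro _ ⟨p, hp, rfl⟩
    obtain ⟨q, hq⟩ := hintne
    have hpcl : p ∈ closure (interior L) :=
      aux_closure_subset_closure_interior hconv hq (subset_closure hp)
    exact (image_closure_subset_closure_image continuous_fst) ⟨p, hpcl, rfl⟩
  have hUconv : Convex ℝ U := hconv.interior.linear_image (LinearMap.fst ℝ (Euc m) (Euc n))
  have hUne : U.Nonempty := hintne.image _
  have hclCU : closure C ⊆ closure U := closure_minimal hCclU isClosed_closure
  have hintclC : interior (closure C) ⊆ U := by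
    obtain ⟨u0, hu0⟩ := hUne
    refine (interior_mono hclCU).trans ?_
    have h2 := aux_interior_closure hUconv (y := u0) (by rwa [hUopen.interior_eq])
    rwa [hUopen.interior_eq] at h2
  have hfree : interior (closure C) ∩ latticePts m = ∅ := by
    rw [eq_empty_iff_forall_notMem]
    rintro x ⟨hx, hxl⟩
    obtain ⟨p, hp, rfl⟩ := hintclC hx
    have hmem : p ∈ interior L ∩ mixedM m n := ⟨hp, hxl⟩
    rw [hint] at hmem
    exact hmem
  have hvsC : vectorSpan ℝ (closure C) = ⊤ := by
    rw [eq_top_iff, ← vectorSpan_fst_image hvs]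
    exact vectorSpan_mono ℝ subset_closure
  have hdimC : setDim (closure C) = m := by
    have h2 := setDim_eq_full (s := closure C) |>.mpr hvsC
    rwa [finrank_euclideanSpace_fin] at h2
  have hLF : IsLatticeFree m (closure C) := ⟨isClosed_closure, hCconv.closure, hdimC, hfree⟩
  exact ⟨hLF, product_lemma hm hLF,
    fun p hp => ⟨subset_closure ⟨p, hp, rfl⟩, trivial⟩⟩

end AuxLemmas

/-- Proposition: description of maximal 𝕄-free sets.
Let `𝕄 = ℤ^m × ℝ^n` (`m ≥ 1`, `n ≥ 0`) be a mixed-integer space in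
`ℝ^d = ℝ^m × ℝ^n`. A set `P ⊆ ℝ^d` is maximal `𝕄`-free if and only if
`P = P' × ℝ^n` for a maximal lattice-free set `P'` in `ℝ^m`. -/
theorem stmt19 (m n : ℕ) (hm : 1 ≤ m) (P : Set (Euc m × Euc n)) :
    IsMaxMFree m n P ↔
      ∃ P' : Set (Euc m), IsMaxLatticeFree m P' ∧ P = P' ×ˢ (univ : Set (Euc n)) := by
  constructor
  · rintro ⟨hPfree, hPmax⟩
    obtain ⟨hLF, hQfree, hsub⟩ := projection_lemma hm hPfree
    have hPeq : P = closure (Prod.fst '' P) ×ˢ (univ : Set (Euc n)) := hPmax _ hQfree hsub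
    refine ⟨closure (Prod.fst '' P), ⟨hLF, ?_⟩, hPeq⟩
    intro K' hK' hsubK
    have hQ'free : IsMFree m n (K' ×ˢ (univ : Set (Euc n))) := product_lemma hm hK'
    have hPK : P = K' ×ˢ (univ : Set (Euc n)) := by
      refine hPmax _ hQ'free ?_
      rw [hPeq]
      exact Set.prod_mono hsubK subset_rfl
    have heq : closure (Prod.fst '' P) ×ˢ (univ : Set (Euc n)) = K' ×ˢ univ := by
      rw [← hPeq, hPK]
    ext x
    constructor
    · intro h
      have hx : ((x, (0 : Euc n)) : Euc m × Euc n) ∈ K' ×ˢ (univ : Set (Euc n)) := by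
        rw [← heq]; exact ⟨h, trivial⟩
      exact hx.1
    · intro h
      have hx : ((x, (0 : Euc n)) : Euc m × Euc n) ∈
          closure (Prod.fst '' P) ×ˢ (univ : Set (Euc n)) := by
        rw [heq]; exact ⟨h, trivial⟩
      exact hx.1
  · rintro ⟨P', ⟨hLF, hmax⟩, rfl⟩
    refine ⟨product_lemma hm hLF, ?_⟩
    intro L' hL' hsub
    obtain ⟨hLF', hQfree, hsub'⟩ := projection_lemma hm hL'
    have hP'sub : P' ⊆ closure (Prod.fst '' L') := fun x hx =>
      subset_closure ⟨(x, 0), hsub ⟨hx, trivial⟩, rfl⟩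
    have hPQ : P' = closure (Prod.fst '' L') := hmax _ hLF' hP'sub
    refine Set.Subset.antisymm hsub fun p hp => ?_
    have h2 := hsub' hp
    exact ⟨by rw [hPQ]; exact h2.1, trivial⟩
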